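/- In an n-restricted combinatorial horoball H_n(Λ), any horizontal segment of a geodesic of length at least 6 must be contained in the top level Λ × {n}. -/

import Mathlib

/-- The combinatorial horoball based on a graph `Λ`: vertices are `Λ⁰ × ℕ`,
vertical edges join `(v,n)` to `(v,n+1)`, horizontal edges join `(v,n)` to `(w,n)`
whenever `0 < d_Λ(v,w) ≤ 2^n`. -/
def horoball {V : Type*} (Λ : SimpleGraph V) : SimpleGraph (V × ℕ) where
  Adj a b := (a.1 = b.1 ∧ (a.2 + 1 = b.2 ∨ b.2 + 1 = a.2)) ∨
    (a.2 = b.2 ∧ a.1 ≠ b.1 ∧ Λ.dist a.1 b.1 ≤ 2 ^ a.2)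
  symm := ⟨by
    rintro ⟨x, m⟩ ⟨y, k⟩ (⟨h1, h2⟩ | ⟨h1, h2, h3⟩)
    · exact Or.inl ⟨h1.symm, h2.symm⟩
    · exact Or.inr ⟨h1.symm, h2.symm, by rwa [SimpleGraph.dist_comm, ← h1]⟩⟩
  loopless := ⟨by
    rintro ⟨x, m⟩ (⟨_, h⟩ | ⟨_, h, _⟩) <;> simp_all⟩

/-- The level-`n` subgraph of the combinatorial horoball on `Λ`, identified with a graph
on the vertices of `Λ`: it is the Rips graph `Rips_{2^n}(Λ)`, whose edges join distinct
vertices at `Λ`-distance at most `2^n`. -/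
def ripsLevel {V : Type*} (Λ : SimpleGraph V) (n : ℕ) : SimpleGraph V where
  Adj v w := v ≠ w ∧ Λ.dist v w ≤ 2 ^ n
  symm := ⟨fun v w h => ⟨h.1.symm, by rw [SimpleGraph.dist_comm]; exact h.2⟩⟩
  loopless := ⟨fun v h => h.1 rfl⟩

/-- The `n`-restricted horoball `H_n(Λ)`: the full subgraph of the combinatorial
horoball on the levels `0` through `n`. -/
def restrictedHoroball {V : Type*} (Λ : SimpleGraph V) (n : ℕ) :
    SimpleGraph {p : V × ℕ // p ∈ {q : V × ℕ | q.2 ≤ n}} :=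
  SimpleGraph.induce {q : V × ℕ | q.2 ≤ n} (horoball Λ)

lemma myLengthDrop {V : Type*} {G : SimpleGraph V} {u v : V} (p : G.Walk u v) (n : ℕ) :
    (p.drop n).length = p.length - n := by
  induction p generalizing n with
  | nil => cases n <;> simp [SimpleGraph.Walk.drop]
  | cons h q ih => cases n <;> simp [SimpleGraph.Walk.drop, ih]

lemma myWalkTo {V : Type*} {G : SimpleGraph V} {a b : V} (w : G.Walk a b) (i : ℕ)
    (hi : i ≤ w.length) : ∃ p : G.Walk a (w.getVert i), p.length = i := by
  have h : w.reverse.getVert (w.length - i) = w.getVert i := by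
    rw [SimpleGraph.Walk.getVert_reverse, Nat.sub_sub_self hi]
  refine ⟨((w.reverse.drop (w.length - i)).reverse).copy rfl h, ?_⟩
  simp [myLengthDrop, Nat.sub_sub_self hi]

lemma myHop {V : Type*} (Λ : SimpleGraph V) (n k : ℕ) (hk : k ≤ n) (x y : V)
    (hd : Λ.dist x y ≤ 2 ^ k) :
    ∃ p : (restrictedHoroball Λ n).Walk ⟨(x, k), hk⟩ ⟨(y, k), hk⟩, p.length ≤ 1 := by
  by_cases hxy : x = y
  · subst hxy; exact ⟨.nil, by simp⟩
  · have hadj : (restrictedHoroball Λ n).Adj ⟨(x, k), hk⟩ ⟨(y, k), hk⟩ :=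
      Or.inr ⟨rfl, hxy, hd⟩
    exact ⟨.cons hadj .nil, by simp⟩

lemma myVert {V : Type*} (Λ : SimpleGraph V) (n k : ℕ) (hk : k ≤ n) (hk1 : k + 1 ≤ n)
    (x : V) : (restrictedHoroball Λ n).Adj ⟨(x, k), hk⟩ ⟨(x, k + 1), hk1⟩ :=
  Or.inl ⟨rfl, Or.inl rfl⟩

/-- In an `n`-restricted horoball, any horizontal segment of a geodesic of length at
least `6` is contained in the top level `Λ × {n}`: if seven consecutive vertices of a
geodesic walk all lie at the same level `m` (so that the six edges between them are
horizontal), then `m = n`. -/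
theorem restrictedHoroball_long_horizontal_top {V : Type*} (Λ : SimpleGraph V)
    (hΛ : Λ.Connected) (n : ℕ) {a b : {q : V × ℕ // q ∈ {q : V × ℕ | q.2 ≤ n}}}
    (w : (restrictedHoroball Λ n).Walk a b)
    (hgeo : w.length = (restrictedHoroball Λ n).dist a b)
    (i m : ℕ) (hi : i + 6 ≤ w.length)
    (hlev : ∀ j : ℕ, i ≤ j → j ≤ i + 6 → ((w.getVert j : V × ℕ)).2 = m) :
    m = n := by
  by_contra hmn
  have hmle : m ≤ n := by
    have hp := (w.getVert i).property
    have h := hlev i le_rfl (by omega)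
    simp only [Set.mem_setOf_eq] at hp
    omega
  have hm1 : m + 1 ≤ n := by omega
  set x : ℕ → V := fun j => ((w.getVert (i + j) : V × ℕ)).1 with hx
  have hadj : ∀ j, j < 6 → Λ.dist (x j) (x (j + 1)) ≤ 2 ^ m := by
    intro j hj
    have h := w.adj_getVert_succ (i := i + j) (by omega)
    have h0 := hlev (i + j) (by omega) (by omega)
    have h1 := hlev (i + j + 1) (by omega) (by omega)
    replace h : (horoball Λ).Adj (w.getVert (i + j)).1 (w.getVert (i + j + 1)).1 := h
    simp only [horoball] at h
    rcases h with ⟨_, hv⟩ | ⟨_, _, hd⟩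
    · omega
    · rw [h0] at hd
      exact hd
  have tri : ∀ j, j < 5 → Λ.dist (x j) (x (j + 2)) ≤ 2 ^ (m + 1) := by
    intro j hj
    calc Λ.dist (x j) (x (j + 2)) ≤ Λ.dist (x j) (x (j + 1)) + Λ.dist (x (j + 1)) (x (j + 2)) :=
          hΛ.dist_triangle
      _ ≤ 2 ^ m + 2 ^ m := add_le_add (hadj j (by omega)) (hadj (j + 1) (by omega))
      _ = 2 ^ (m + 1) := by ring
  obtain ⟨p1, hp1⟩ := myHop Λ n (m + 1) hm1 (x 0) (x 2) (tri 0 (by omega))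
  obtain ⟨p2, hp2⟩ := myHop Λ n (m + 1) hm1 (x 2) (x 4) (tri 2 (by omega))
  obtain ⟨p3, hp3⟩ := myHop Λ n (m + 1) hm1 (x 4) (x 6) (tri 4 (by omega))
  have hu : w.getVert i = (⟨(x 0, m), hmle⟩ : {q : V × ℕ // q ∈ {q : V × ℕ | q.2 ≤ n}}) := by
    apply Subtype.ext
    apply Prod.ext
    · rfl
    · exact hlev i le_rfl (by omega)
  have hv6 : w.getVert (i + 6) = (⟨(x 6, m), hmle⟩ : {q : V × ℕ // q ∈ {q : V × ℕ | q.2 ≤ n}}) := by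
    apply Subtype.ext
    apply Prod.ext
    · rfl
    · exact hlev (i + 6) (by omega) le_rfl
  let pshort : (restrictedHoroball Λ n).Walk ⟨(x 0, m), hmle⟩ ⟨(x 6, m), hmle⟩ :=
    SimpleGraph.Walk.cons (myVert Λ n m hmle hm1 (x 0))
      ((p1.append (p2.append p3)).append
        (SimpleGraph.Walk.cons ((myVert Λ n m hmle hm1 (x 6)).symm) SimpleGraph.Walk.nil))
  have hps : pshort.length ≤ 5 := by
    simp only [pshort, SimpleGraph.Walk.length_cons, SimpleGraph.Walk.length_append,
      SimpleGraph.Walk.length_nil]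
    omega
  obtain ⟨pa, hpa⟩ := myWalkTo w i (by omega)
  have hpb : (w.drop (i + 6)).length = w.length - (i + 6) := myLengthDrop w (i + 6)
  let full : (restrictedHoroball Λ n).Walk a b :=
    pa.append ((pshort.copy hu.symm hv6.symm).append (w.drop (i + 6)))
  have hdle : (restrictedHoroball Λ n).dist a b ≤ full.length := SimpleGraph.dist_le full
  have hflen : full.length = i + (pshort.length + (w.length - (i + 6))) := by
    simp only [full, SimpleGraph.Walk.length_append, SimpleGraph.Walk.length_copy, hpa, hpb]
  omega
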